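/- For f ∈ H^s, 1 ≤ n ≤ s, and every k ∈ ℤ, the error of integrating the Taylor polynomial T_{f,n} of f at 1/2 of degree n−1 satisfies |I_k(f) − I_k(T_{f,n})| ≤ ‖f^{(n)}‖_{L²}/(2^{n−1}·n!) ≤ ‖f‖_{H^s}/(2^{n−1}·n!). -/

import Mathlib

open MeasureTheory Real Complex intervalIntegral

noncomputable section

/-- The oscillatory integral `I_k(f) = ∫₀¹ f(x) e^{-2πikx} dx`. -/
def Ik (k : ℤ) (f : ℝ → ℂ) : ℂ :=
  ∫ x in (0:ℝ)..1, f x * Complex.exp (-(2 * Real.pi * Complex.I * (k : ℂ) * (x : ℂ)))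

/-- The Taylor polynomial of `f` at `1/2` of degree `n-1`. -/
def taylorHalf (f : ℝ → ℂ) (n : ℕ) (x : ℝ) : ℂ :=
  ∑ ℓ ∈ Finset.range n, iteratedDeriv ℓ f (1/2) * ((x : ℂ) - 1/2)^ℓ / (Nat.factorial ℓ)

/-- The squared `Hˢ` norm. -/
def hsNormSq (s : ℕ) (f : ℝ → ℂ) : ℝ :=
  (∑ ℓ ∈ Finset.range s, ‖∫ x in (0:ℝ)..1, iteratedDeriv ℓ f x‖^2) +
  ∫ x in (0:ℝ)..1, ‖iteratedDeriv s f x‖^2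

-- L¹ ≤ L² on [0,1] (squared form)
lemma sq_int_le (g : ℝ → ℝ) (hg : Continuous g) :
    (∫ x in (0:ℝ)..1, g x)^2 ≤ ∫ x in (0:ℝ)..1, (g x)^2 := by
  set m := ∫ x in (0:ℝ)..1, g x with hm
  have h1 : (0:ℝ) ≤ ∫ x in (0:ℝ)..1, (g x - m)^2 :=
    intervalIntegral.integral_nonneg (by norm_num) (fun x _ => sq_nonneg _)
  have h2 : ∫ x in (0:ℝ)..1, (g x - m)^2
      = (∫ x in (0:ℝ)..1, (g x)^2) - 2*m*m + m^2 := by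
    have e : ∀ x : ℝ, (g x - m)^2 = (g x)^2 - 2*m*(g x) + m^2 := fun x => by ring
    simp_rw [e]
    rw [intervalIntegral.integral_add (f := fun x => g x ^ 2 - 2*m*g x) (g := fun _ => m^2) (((hg.pow 2).sub ((continuous_const.mul hg))).intervalIntegrable _ _) (continuous_const.intervalIntegrable _ _),
      intervalIntegral.integral_sub (f := fun x => g x ^ 2) (g := fun x => 2*m*g x) ((hg.pow 2).intervalIntegrable _ _) ((continuous_const.mul hg).intervalIntegrable _ _),
      intervalIntegral.integral_const_mul, intervalIntegral.integral_const, ← hm]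
    simp
  nlinarith

lemma l1_le_l2 (g : ℝ → ℝ) (hg : Continuous g) :
    ∫ x in (0:ℝ)..1, g x ≤ Real.sqrt (∫ x in (0:ℝ)..1, (g x)^2) :=
  Real.le_sqrt_of_sq_le (sq_int_le g hg)

lemma gderiv (f : ℝ → ℂ) {s : ℕ} (hf : ContDiff ℝ s f) (x : ℝ) (m : ℕ) (hm : m + 1 ≤ s) (t : ℝ) :
    HasDerivAt (fun u : ℝ => ∑ ℓ ∈ Finset.range (m+1),
        iteratedDeriv ℓ f u * ((x:ℂ) - (u:ℂ))^ℓ / (Nat.factorial ℓ))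
      (iteratedDeriv (m+1) f t * ((x:ℂ) - (t:ℂ))^m / (Nat.factorial m)) t := by
  have hd : ∀ ℓ : ℕ, ℓ + 1 ≤ s → HasDerivAt (iteratedDeriv ℓ f) (iteratedDeriv (ℓ+1) f t) t := by
    intro ℓ hℓ
    have : Differentiable ℝ (iteratedDeriv ℓ f) :=
      hf.differentiable_iteratedDeriv ℓ (by exact_mod_cast Nat.lt_of_succ_le hℓ)
    simpa [iteratedDeriv_succ] using (this t).hasDerivAt
  have hc : ∀ ℓ : ℕ, HasDerivAt (fun u : ℝ => ((x:ℂ) - (u:ℂ))^ℓ)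
      (-(ℓ : ℂ) * ((x:ℂ) - (t:ℂ))^(ℓ-1)) t := by
    intro ℓ
    have hE : HasDerivAt (fun w : ℂ => ((x:ℂ) - w)^ℓ)
        ((ℓ:ℂ) * ((x:ℂ) - (t:ℂ))^(ℓ-1) * (0-1)) (t:ℂ) :=
      ((hasDerivAt_const ((t:ℝ):ℂ) (x:ℂ)).sub (hasDerivAt_id ((t:ℝ):ℂ))).pow ℓ
    have := hE.comp_ofReal
    convert this using 1
    ring
  induction m with
  | zero =>
    have := hd 0 hm
    simp only [Finset.sum_range_one, iteratedDeriv_zero, pow_zero, mul_one, Nat.factorial_zero,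
      Nat.cast_one, div_one]
    simpa [iteratedDeriv_zero] using this
  | succ m ih =>
    have hm' : m + 1 ≤ s := by omega
    have ihm := ih hm'
    have hterm : HasDerivAt (fun u : ℝ => iteratedDeriv (m+1) f u * ((x:ℂ)-(u:ℂ))^(m+1) / (Nat.factorial (m+1)))
        ((iteratedDeriv (m+2) f t * ((x:ℂ)-(t:ℂ))^(m+1)
          + iteratedDeriv (m+1) f t * (-(m+1 : ℂ) * ((x:ℂ)-(t:ℂ))^m)) / (Nat.factorial (m+1))) t := by
      exact ((hd (m+1) hm).mul (by simpa using hc (m+1))).div_const _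
    have := ihm.add hterm
    have hsum : (fun u : ℝ => ∑ ℓ ∈ Finset.range (m+2),
        iteratedDeriv ℓ f u * ((x:ℂ) - (u:ℂ))^ℓ / (Nat.factorial ℓ))
        = fun u => (∑ ℓ ∈ Finset.range (m+1),
          iteratedDeriv ℓ f u * ((x:ℂ) - (u:ℂ))^ℓ / (Nat.factorial ℓ))
          + iteratedDeriv (m+1) f u * ((x:ℂ)-(u:ℂ))^(m+1) / (Nat.factorial (m+1)) := by
      funext u; rw [Finset.sum_range_succ]
    rw [hsum]
    refine HasDerivAt.congr_deriv this ?_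
    have hfac : ((Nat.factorial (m+1) : ℂ)) = (m+1 : ℂ) * (Nat.factorial m : ℂ) := by
      push_cast [Nat.factorial_succ]; ring
    have h0 : (Nat.factorial m : ℂ) ≠ 0 := Nat.cast_ne_zero.mpr (Nat.factorial_ne_zero m)
    have h1 : ((m:ℂ) + 1) ≠ 0 := by
      exact Nat.cast_add_one_ne_zero m
    rw [hfac]
    field_simp
    ring

lemma taylor_remainder (f : ℝ → ℂ) {s : ℕ} (hf : ContDiff ℝ s f) (m : ℕ) (hm : m + 1 ≤ s)
    (x : ℝ) :
    f x - taylorHalf f (m+1) x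
      = ∫ t in (1/2:ℝ)..x, iteratedDeriv (m+1) f t * ((x:ℂ) - (t:ℂ))^m / (Nat.factorial m) := by
  have hDc : Continuous (iteratedDeriv (m+1) f) :=
    hf.continuous_iteratedDeriv (m+1) (by exact_mod_cast hm)
  have hcont : Continuous (fun t : ℝ => iteratedDeriv (m+1) f t * ((x:ℂ) - (t:ℂ))^m / (Nat.factorial m)) := by
    exact (hDc.mul ((continuous_const.sub Complex.continuous_ofReal).pow m)).div_const _
  have hFTC := intervalIntegral.integral_eq_sub_of_hasDerivAt
      (f := fun u : ℝ => ∑ ℓ ∈ Finset.range (m+1),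
        iteratedDeriv ℓ f u * ((x:ℂ) - (u:ℂ))^ℓ / (Nat.factorial ℓ))
      (f' := fun t => iteratedDeriv (m+1) f t * ((x:ℂ) - (t:ℂ))^m / (Nat.factorial m))
      (a := (1/2:ℝ)) (b := x)
      (fun t _ => gderiv f hf x m hm t) (hcont.intervalIntegrable _ _)
  rw [hFTC]
  have gx : (∑ ℓ ∈ Finset.range (m+1), iteratedDeriv ℓ f x * ((x:ℂ)-(x:ℂ))^ℓ / (Nat.factorial ℓ))
      = f x := by
    rw [Finset.sum_eq_single_of_mem 0 (Finset.mem_range.mpr (Nat.succ_pos m))]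
    · simp
    · intro ℓ _ hℓ; simp [sub_self, zero_pow hℓ]
  show _ = (∑ ℓ ∈ Finset.range (m+1), iteratedDeriv ℓ f x * ((x:ℂ)-(x:ℂ))^ℓ / (Nat.factorial ℓ))
      - (∑ ℓ ∈ Finset.range (m+1), iteratedDeriv ℓ f (1/2) * ((x:ℂ)-((1/2:ℝ):ℂ))^ℓ / (Nat.factorial ℓ))
  rw [gx]
  congr 1
  unfold taylorHalf
  norm_num

lemma int_abs_le (a b : ℝ) (ha0 : (0:ℝ) ≤ a) (hb0 : (0:ℝ) ≤ b) (ha1 : a ≤ 1) (hb1 : b ≤ 1)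
    (φ ψ : ℝ → ℝ) (hφ : Continuous φ) (hψ : Continuous ψ)
    (hφ0 : ∀ t, 0 ≤ φ t) (hψ0 : ∀ t, 0 ≤ ψ t)
    (hle : ∀ t ∈ Set.uIcc a b, φ t ≤ ψ t) :
    |∫ t in a..b, φ t| ≤ ∫ t in (0:ℝ)..1, ψ t := by
  have hψi : IntervalIntegrable ψ volume 0 1 := hψ.intervalIntegrable _ _
  have hψae : 0 ≤ᵐ[volume.restrict (Set.Ioc (0:ℝ) 1)] ψ :=
    Filter.Eventually.of_forall hψ0
  rcases le_total a b with hab | hab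
  · rw [_root_.abs_of_nonneg (intervalIntegral.integral_nonneg hab fun t _ => hφ0 t)]
    calc ∫ t in a..b, φ t ≤ ∫ t in a..b, ψ t :=
          intervalIntegral.integral_mono_on hab (hφ.intervalIntegrable _ _)
            (hψ.intervalIntegrable _ _) (fun t ht => hle t (by rwa [Set.uIcc_of_le hab]))
      _ ≤ ∫ t in (0:ℝ)..1, ψ t :=
          intervalIntegral.integral_mono_interval ha0 hab hb1 hψae hψi
  · rw [intervalIntegral.integral_symm, abs_neg,
      _root_.abs_of_nonneg (intervalIntegral.integral_nonneg hab fun t _ => hφ0 t)]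
    calc ∫ t in b..a, φ t ≤ ∫ t in b..a, ψ t :=
          intervalIntegral.integral_mono_on hab (hφ.intervalIntegrable _ _)
            (hψ.intervalIntegrable _ _) (fun t ht => hle t (by rwa [Set.uIcc_of_ge hab]))
      _ ≤ ∫ t in (0:ℝ)..1, ψ t :=
          intervalIntegral.integral_mono_interval hb0 hab ha1 hψae hψi

lemma remainder_ptwise (f : ℝ → ℂ) {s : ℕ} (hf : ContDiff ℝ s f) (m : ℕ) (hm : m + 1 ≤ s)
    (x : ℝ) (hx0 : 0 ≤ x) (hx1 : x ≤ 1) :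
    ‖f x - taylorHalf f (m+1) x‖
      ≤ |x - 1/2|^m / (Nat.factorial m) * ∫ t in (0:ℝ)..1, ‖iteratedDeriv (m+1) f t‖ := by
  have hDc : Continuous (iteratedDeriv (m+1) f) :=
    hf.continuous_iteratedDeriv (m+1) (by exact_mod_cast hm)
  rw [taylor_remainder f hf m hm x]
  refine le_trans (intervalIntegral.norm_integral_le_abs_integral_norm) ?_
  have hnorm : ∀ t : ℝ, ‖iteratedDeriv (m+1) f t * ((x:ℂ)-(t:ℂ))^m / (Nat.factorial m)‖
      = ‖iteratedDeriv (m+1) f t‖ * |x - t|^m / (Nat.factorial m) := by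
    intro t
    rw [norm_div, norm_mul, norm_pow]
    congr 2
    · rw [show ((x:ℂ)-(t:ℂ)) = ((x - t : ℝ) : ℂ) by push_cast; ring]
      rw [Complex.norm_real, Real.norm_eq_abs]
    · simp
  have key := int_abs_le (1/2) x (by norm_num) hx0 (by norm_num) hx1
      (fun t => ‖iteratedDeriv (m+1) f t * ((x:ℂ)-(t:ℂ))^m / (Nat.factorial m)‖)
      (fun t => |x - 1/2|^m / (Nat.factorial m) * ‖iteratedDeriv (m+1) f t‖)
      (by fun_prop) (by fun_prop) (fun t => norm_nonneg _)
      (fun t => by positivity) ?_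
  · calc |∫ t in (1/2:ℝ)..x, ‖iteratedDeriv (m+1) f t * ((x:ℂ)-(t:ℂ))^m / (Nat.factorial m)‖|
        ≤ ∫ t in (0:ℝ)..1, |x - 1/2|^m / (Nat.factorial m) * ‖iteratedDeriv (m+1) f t‖ := key
      _ = |x - 1/2|^m / (Nat.factorial m) * ∫ t in (0:ℝ)..1, ‖iteratedDeriv (m+1) f t‖ :=
          intervalIntegral.integral_const_mul _ _
  · intro t ht
    rw [hnorm t]
    have ht' : |x - t| ≤ |x - 1/2| := by
      rcases le_total (1/2 : ℝ) x with h | h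
      · rw [Set.uIcc_of_le h] at ht
        rw [_root_.abs_of_nonneg (by linarith [ht.2]), _root_.abs_of_nonneg (by linarith)]
        linarith [ht.1]
      · rw [Set.uIcc_of_ge h] at ht
        rw [_root_.abs_of_nonpos (by linarith [ht.1]), _root_.abs_of_nonpos (by linarith)]
        linarith [ht.2]
    have : ‖iteratedDeriv (m+1) f t‖ * |x - t|^m / (Nat.factorial m)
        ≤ ‖iteratedDeriv (m+1) f t‖ * |x - 1/2|^m / (Nat.factorial m) := by
      gcongr
    refine this.trans_eq ?_
    ring

lemma hJ (m : ℕ) : ∫ x in (0:ℝ)..1, |x - 1/2|^m = (1/2)^m / (m+1) := by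
  have hint : ∀ a b : ℝ, IntervalIntegrable (fun x : ℝ => |x - 1/2|^m) volume a b :=
    fun a b => (by fun_prop : Continuous fun x : ℝ => |x - 1/2|^m).intervalIntegrable a b
  rw [← intervalIntegral.integral_add_adjacent_intervals (a := (0:ℝ)) (b := 1/2) (c := 1)
    (hint 0 (1/2)) (hint (1/2) 1)]
  have e1 : (∫ x in (0:ℝ)..(1/2:ℝ), |x - 1/2|^m) = ∫ x in (0:ℝ)..(1/2:ℝ), (1/2 - x)^m := by
    apply intervalIntegral.integral_congr
    intro x hx
    rw [Set.uIcc_of_le (by norm_num)] at hx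
    dsimp only
    rw [_root_.abs_of_nonpos (by linarith [hx.2]), neg_sub]
  have e2 : (∫ x in (1/2:ℝ)..1, |x - 1/2|^m) = ∫ x in (1/2:ℝ)..1, (x - 1/2)^m := by
    apply intervalIntegral.integral_congr
    intro x hx
    rw [Set.uIcc_of_le (by norm_num)] at hx
    dsimp only
    rw [_root_.abs_of_nonneg (by linarith [hx.1])]
  rw [e1, e2, intervalIntegral.integral_comp_sub_left (fun x : ℝ => x^m) (1/2),
    intervalIntegral.integral_comp_sub_right (fun x : ℝ => x^m) (1/2)]
  norm_num [integral_pow]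
  ring

lemma poincare (g g' : ℝ → ℂ) (hg : ∀ t, HasDerivAt g (g' t) t) (hc : Continuous g') :
    (∫ x in (0:ℝ)..1, ‖g x‖^2) ≤ ‖∫ x in (0:ℝ)..1, g x‖^2 + ∫ x in (0:ℝ)..1, ‖g' x‖^2 := by
  have hgc : Continuous g := by
    rw [continuous_iff_continuousAt]; exact fun x => (hg x).continuousAt
  set c := ∫ x in (0:ℝ)..1, g x with hc'
  set M := ∫ x in (0:ℝ)..1, ‖g' x‖ with hM
  -- pointwise bound on the oscillation
  have key : ∀ x ∈ Set.Icc (0:ℝ) 1, ‖g x - c‖ ≤ M := by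
    intro x hx
    have hxc : g x - c = ∫ t in (0:ℝ)..1, (g x - g t) := by
      rw [intervalIntegral.integral_sub (intervalIntegrable_const)
        (hgc.intervalIntegrable _ _)]
      simp [hc']
    rw [hxc]
    refine le_trans (intervalIntegral.norm_integral_le_integral_norm (by norm_num)) ?_
    have hpt : ∀ t ∈ Set.Icc (0:ℝ) 1, ‖g x - g t‖ ≤ M := by
      intro t ht
      have he : g x - g t = ∫ u in t..x, g' u :=
        (intervalIntegral.integral_eq_sub_of_hasDerivAt (fun u _ => hg u)
          (hc.intervalIntegrable _ _)).symm
      rw [he]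
      refine le_trans intervalIntegral.norm_integral_le_abs_integral_norm ?_
      exact int_abs_le t x ht.1 hx.1 ht.2 hx.2 _ _ hc.norm hc.norm
        (fun _ => norm_nonneg _) (fun _ => norm_nonneg _) (fun _ _ => le_rfl)
    calc (∫ t in (0:ℝ)..1, ‖g x - g t‖) ≤ ∫ _t in (0:ℝ)..1, M :=
          intervalIntegral.integral_mono_on (by norm_num)
            ((continuous_const.sub hgc).norm.intervalIntegrable _ _)
            intervalIntegrable_const hpt
      _ = M := by simp
  have hM0 : 0 ≤ M := intervalIntegral.integral_nonneg (by norm_num) (fun _ _ => norm_nonneg _)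
  -- expansion : ∫‖g‖² = ‖c‖² + ∫‖g-c‖²
  have ept : ∀ x : ℝ, ‖g x‖^2 = ‖g x - c‖^2 + 2 * ((g x - c) * (starRingEnd ℂ) c).re + ‖c‖^2 := by
    intro x
    have h := Complex.normSq_add (g x - c) c
    rw [sub_add_cancel] at h
    have nsq : ∀ z : ℂ, ‖z‖^2 = Complex.normSq z := fun z => by
      rw [Complex.sq_norm]
    rw [nsq, nsq, nsq, h]; ring
  have hre : (∫ x in (0:ℝ)..1, ((g x - c) * (starRingEnd ℂ) c).re) = 0 := by
    have hint : IntervalIntegrable (fun x => (g x - c) * (starRingEnd ℂ) c) volume 0 1 :=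
      (((hgc.sub continuous_const).mul continuous_const)).intervalIntegrable _ _
    have h1 : (∫ x in (0:ℝ)..1, (g x - c) * (starRingEnd ℂ) c) = 0 := by
      rw [intervalIntegral.integral_mul_const,
        intervalIntegral.integral_sub (hgc.intervalIntegrable _ _) intervalIntegrable_const]
      simp [hc']
    rw [intervalIntegral.integral_of_le (by norm_num : (0:ℝ) ≤ 1)] at h1 ⊢
    have hint' : MeasureTheory.Integrable (fun x => (g x - c) * (starRingEnd ℂ) c)
        (volume.restrict (Set.Ioc (0:ℝ) 1)) :=
      (intervalIntegrable_iff_integrableOn_Ioc_of_le (by norm_num)).mp hint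
    have h2 := integral_re hint'
    simp only [RCLike.re_to_complex] at h2
    rw [h2, h1]; simp
  have expand : (∫ x in (0:ℝ)..1, ‖g x‖^2)
      = (∫ x in (0:ℝ)..1, ‖g x - c‖^2) + ‖c‖^2 := by
    have i1 : IntervalIntegrable (fun x => ‖g x - c‖^2) volume 0 1 :=
      ((hgc.sub continuous_const).norm.pow 2).intervalIntegrable _ _
    have i2 : IntervalIntegrable (fun x => 2 * ((g x - c) * (starRingEnd ℂ) c).re) volume 0 1 :=
      (continuous_const.mul (Complex.continuous_re.comp ((hgc.sub continuous_const).mul continuous_const))).intervalIntegrable _ _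
    calc (∫ x in (0:ℝ)..1, ‖g x‖^2)
        = ∫ x in (0:ℝ)..1, (‖g x - c‖^2 + 2 * ((g x - c) * (starRingEnd ℂ) c).re + ‖c‖^2) := by
          exact intervalIntegral.integral_congr (fun x _ => ept x)
      _ = (∫ x in (0:ℝ)..1, ‖g x - c‖^2) + (∫ x in (0:ℝ)..1, 2 * ((g x - c) * (starRingEnd ℂ) c).re)
            + ∫ _x in (0:ℝ)..1, ‖c‖^2 := by
          rw [intervalIntegral.integral_add (i1.add i2) (intervalIntegrable_const),
            intervalIntegral.integral_add i1 i2]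
      _ = (∫ x in (0:ℝ)..1, ‖g x - c‖^2) + ‖c‖^2 := by
          rw [intervalIntegral.integral_const_mul, hre]; simp
  have h2 : (∫ x in (0:ℝ)..1, ‖g x - c‖^2) ≤ M^2 := by
    calc (∫ x in (0:ℝ)..1, ‖g x - c‖^2) ≤ ∫ _x in (0:ℝ)..1, M^2 :=
          intervalIntegral.integral_mono_on (by norm_num)
            (((hgc.sub continuous_const).norm.pow 2).intervalIntegrable _ _)
            intervalIntegrable_const
            (fun x hx => pow_le_pow_left₀ (norm_nonneg _) (key x hx) 2)
      _ = M^2 := by simp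
  have h3 : M^2 ≤ ∫ x in (0:ℝ)..1, ‖g' x‖^2 := sq_int_le _ hc.norm
  linarith [expand, h2, h3]

lemma norm_e (k : ℤ) (x : ℝ) :
    ‖Complex.exp (-(2 * Real.pi * Complex.I * (k:ℂ) * (x:ℂ)))‖ = 1 := by
  rw [show (-(2 * (Real.pi:ℂ) * Complex.I * (k:ℂ) * (x:ℂ)))
      = ((-(2*Real.pi*k*x) : ℝ):ℂ) * Complex.I by push_cast; ring]
  rw [Complex.norm_exp_ofReal_mul_I]

lemma part2 (f : ℝ → ℂ) (s : ℕ) (hf : ContDiff ℝ s f) (n : ℕ) (hns : n ≤ s) :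
    (∫ x in (0:ℝ)..1, ‖iteratedDeriv n f x‖^2) ≤ hsNormSq s f := by
  have claim : ∀ m, n ≤ m → m ≤ s →
      (∫ x in (0:ℝ)..1, ‖iteratedDeriv n f x‖^2)
        ≤ (∑ ℓ ∈ Finset.Ico n m, ‖∫ x in (0:ℝ)..1, iteratedDeriv ℓ f x‖^2)
          + ∫ x in (0:ℝ)..1, ‖iteratedDeriv m f x‖^2 := by
    intro m hm
    induction m, hm using Nat.le_induction with
    | base => intro _; simp
    | succ m hnm ih =>
      intro hms
      have h1 := ih (by omega)
      have hd : ∀ t, HasDerivAt (iteratedDeriv m f) (iteratedDeriv (m+1) f t) t := by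
        intro t
        have : Differentiable ℝ (iteratedDeriv m f) :=
          hf.differentiable_iteratedDeriv m (by exact_mod_cast Nat.lt_of_succ_le hms)
        simpa [iteratedDeriv_succ] using (this t).hasDerivAt
      have h2 := poincare (iteratedDeriv m f) (iteratedDeriv (m+1) f) hd
        (hf.continuous_iteratedDeriv (m+1) (by exact_mod_cast hms))
      rw [Finset.sum_Ico_succ_top hnm]
      linarith
  have := claim s hns le_rfl
  refine this.trans ?_
  unfold hsNormSq
  have hsum : (∑ ℓ ∈ Finset.Ico n s, ‖∫ x in (0:ℝ)..1, iteratedDeriv ℓ f x‖^2)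
      ≤ ∑ ℓ ∈ Finset.range s, ‖∫ x in (0:ℝ)..1, iteratedDeriv ℓ f x‖^2 := by
    refine Finset.sum_le_sum_of_subset_of_nonneg ?_ (fun i _ _ => by positivity)
    rw [Finset.range_eq_Ico]
    exact Finset.Ico_subset_Ico (Nat.zero_le n) le_rfl
  linarith

/-- Error of integrating the Taylor polynomial of `f` at `1/2`:
`|I_k(f) - I_k(T_{f,n})| ≤ ‖f⁽ⁿ⁾‖_{L²}/(2^{n-1} n!) ≤ ‖f‖_{Hˢ}/(2^{n-1} n!)`. -/
theorem stmt_17 (s : ℕ) (hs : 1 ≤ s) (n : ℕ) (hn1 : 1 ≤ n) (hns : n ≤ s)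
    (k : ℤ) (f : ℝ → ℂ) (hf : ContDiff ℝ s f) :
    ‖Ik k f - Ik k (taylorHalf f n)‖
        ≤ Real.sqrt (∫ x in (0:ℝ)..1, ‖iteratedDeriv n f x‖^2) /
            (2^(n-1) * Nat.factorial n) ∧
    Real.sqrt (∫ x in (0:ℝ)..1, ‖iteratedDeriv n f x‖^2) /
            (2^(n-1) * Nat.factorial n)
        ≤ Real.sqrt (hsNormSq s f) / (2^(n-1) * Nat.factorial n) := by
  obtain ⟨m, rfl⟩ : ∃ m, n = m + 1 := ⟨n - 1, by omega⟩
  have hDc : Continuous (iteratedDeriv (m+1) f) :=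
    hf.continuous_iteratedDeriv (m+1) (by exact_mod_cast hns)
  set S := ∫ x in (0:ℝ)..1, ‖iteratedDeriv (m+1) f x‖^2 with hS
  set L := ∫ t in (0:ℝ)..1, ‖iteratedDeriv (m+1) f t‖ with hL
  have hL0 : 0 ≤ L :=
    intervalIntegral.integral_nonneg (by norm_num) (fun _ _ => norm_nonneg _)
  have hLS : L ≤ Real.sqrt S := l1_le_l2 _ hDc.norm
  have hTc : Continuous (taylorHalf f (m+1)) := by
    unfold taylorHalf
    exact continuous_finset_sum _ fun ℓ _ =>
      (continuous_const.mul ((Complex.continuous_ofReal.sub continuous_const).pow ℓ)).div_const _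
  have hEc : Continuous (fun x : ℝ =>
      Complex.exp (-(2 * Real.pi * Complex.I * (k:ℂ) * (x:ℂ)))) := by
    apply Complex.continuous_exp.comp
    fun_prop
  have hfc : Continuous f := hf.continuous
  constructor
  · have stepA : Ik k f - Ik k (taylorHalf f (m+1))
        = ∫ x in (0:ℝ)..1, (f x - taylorHalf f (m+1) x)
            * Complex.exp (-(2 * Real.pi * Complex.I * (k:ℂ) * (x:ℂ))) := by
      unfold Ik
      rw [← intervalIntegral.integral_sub (f := fun x => f x * Complex.exp (-(2 * Real.pi * Complex.I * (k:ℂ) * (x:ℂ)))) (g := fun x => taylorHalf f (m+1) x * Complex.exp (-(2 * Real.pi * Complex.I * (k:ℂ) * (x:ℂ)))) ((hfc.mul hEc).intervalIntegrable _ _)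
        ((hTc.mul hEc).intervalIntegrable _ _)]
      exact intervalIntegral.integral_congr (fun x _ => by ring)
    rw [stepA]
    have stepB : ‖∫ x in (0:ℝ)..1, (f x - taylorHalf f (m+1) x)
          * Complex.exp (-(2 * Real.pi * Complex.I * (k:ℂ) * (x:ℂ)))‖
        ≤ ∫ x in (0:ℝ)..1, ‖f x - taylorHalf f (m+1) x‖ := by
      refine (intervalIntegral.norm_integral_le_integral_norm (by norm_num)).trans_eq ?_
      refine intervalIntegral.integral_congr (fun x _ => ?_)
      rw [norm_mul, norm_e, mul_one]
    refine stepB.trans ?_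
    have stepC : (∫ x in (0:ℝ)..1, ‖f x - taylorHalf f (m+1) x‖)
        ≤ ∫ x in (0:ℝ)..1, (L / Nat.factorial m) * |x - 1/2|^m := by
      refine intervalIntegral.integral_mono_on (by norm_num)
        ((hfc.sub hTc).norm.intervalIntegrable _ _)
        ((by fun_prop : Continuous fun x : ℝ => (L / Nat.factorial m) * |x - 1/2|^m).intervalIntegrable _ _)
        (fun x hx => ?_)
      have := remainder_ptwise f hf m hns x hx.1 hx.2
      rw [← hL] at this
      refine this.trans_eq ?_
      ring
    refine stepC.trans ?_
    rw [intervalIntegral.integral_const_mul, hJ m]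
    have hfac : (0:ℝ) < Nat.factorial m := by positivity
    rw [show ((m:ℕ)+1-1 : ℕ) = m from rfl]
    have heq : L / (Nat.factorial m) * ((1/2)^m / (m+1))
        = L / (2^m * Nat.factorial (m+1)) := by
      rw [Nat.factorial_succ]
      push_cast
      field_simp
      try ring
      try exact Or.inl trivial
      rw [mul_assoc, ← mul_pow]; norm_num
    rw [heq]
    gcongr
  · have hmono := Real.sqrt_le_sqrt (part2 f s hf (m+1) hns)
    gcongr
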